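/- Let A ∈ ℝ^{n×N} be a Parseval frame and T ⊆ {1,…,N} with |T| < n such that A_T* A_T and A_{T^c} A_{T^c}* are invertible. Then the partial sums A_T* + A_T*(A_{T^c} A_{T^c}*) + … + A_T*(A_{T^c} A_{T^c}*)^k converge, as k → ∞, to (A_T* A_T)^{-1} A_T*. -/

import Mathlib

open Matrix Finset Filter Topology

/-- Euclidean norm of a vector. -/
noncomputable def enorm {k : ℕ} (x : Fin k → ℝ) : ℝ := Real.sqrt (∑ i, x i ^ 2)

/-- `x` has at most `s` nonzero entries. -/
def IsSparse {k : ℕ} (s : ℕ) (x : Fin k → ℝ) : Prop :=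
  (Finset.univ.filter fun i => x i ≠ 0).card ≤ s

/-- Spectral norm (ℓ²-operator norm) of a matrix. -/
noncomputable def specNorm {m k : Type*} [Fintype m] [Fintype k] [DecidableEq k]
    (M : Matrix m k ℝ) : ℝ :=
  ‖LinearMap.toContinuousLinearMap (Matrix.toEuclideanLin M)‖

/-- `cols A T` is the submatrix of `A` consisting of the columns indexed by `T`. -/
def cols {n N : ℕ} (A : Matrix (Fin n) (Fin N) ℝ) (T : Finset (Fin N)) :
    Matrix (Fin n) {i : Fin N // i ∈ T} ℝ := Matrix.of fun r c => A r c.1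

/-- `subv x T` is the subvector of `x` consisting of the entries indexed by `T`. -/
def subv {N : ℕ} (x : Fin N → ℝ) (T : Finset (Fin N)) : {i : Fin N // i ∈ T} → ℝ :=
  fun i => x i.1

/-- The feedback term `(A_T* A_T)⁻¹ A_T* A_{Tᶜ} x_{Tᶜ}`. -/
noncomputable def fb {n N : ℕ} (A : Matrix (Fin n) (Fin N) ℝ) (T : Finset (Fin N))
    (x : Fin N → ℝ) : {i : Fin N // i ∈ T} → ℝ :=
  ((cols A T)ᵀ * cols A T)⁻¹ *ᵥ ((cols A T)ᵀ *ᵥ (cols A Tᶜ *ᵥ subv x Tᶜ))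

/-! ### Auxiliary API for `specNorm` -/

/-- The continuous linear map associated to a matrix. -/
noncomputable def clm {m k : Type*} [Fintype m] [Fintype k] [DecidableEq k]
    (M : Matrix m k ℝ) : EuclideanSpace ℝ k →L[ℝ] EuclideanSpace ℝ m :=
  LinearMap.toContinuousLinearMap (Matrix.toEuclideanLin M)

lemma specNorm_eq {m k : Type*} [Fintype m] [Fintype k] [DecidableEq k]
    (M : Matrix m k ℝ) : specNorm M = ‖clm M‖ := rfl

lemma clm_coe {m k : Type*} [Fintype m] [Fintype k] [DecidableEq k]
    (M : Matrix m k ℝ) (x : EuclideanSpace ℝ k) :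
    clm M x = Matrix.toEuclideanLin M x := rfl

lemma clm_mul {l m k : Type*} [Fintype l] [Fintype m] [Fintype k]
    [DecidableEq m] [DecidableEq k] (P : Matrix l m ℝ) (Q : Matrix m k ℝ) :
    clm (P * Q) = (clm P).comp (clm Q) := by
  ext x
  simp only [clm, ContinuousLinearMap.comp_apply, LinearMap.coe_toContinuousLinearMap']
  simp only [Matrix.toEuclideanLin_apply, Equiv.apply_symm_apply, Matrix.mulVec_mulVec]

lemma clm_one {k : Type*} [Fintype k] [DecidableEq k] :
    clm (1 : Matrix k k ℝ) = ContinuousLinearMap.id ℝ (EuclideanSpace ℝ k) := by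
  ext x
  simp only [clm, LinearMap.coe_toContinuousLinearMap', Matrix.toEuclideanLin_apply,
    Matrix.one_mulVec, ContinuousLinearMap.id_apply, Equiv.symm_apply_apply]

lemma clm_sub {m k : Type*} [Fintype m] [Fintype k] [DecidableEq k]
    (P Q : Matrix m k ℝ) : clm (P - Q) = clm P - clm Q := by
  ext x
  simp [clm, map_sub]

lemma specNorm_nonneg {m k : Type*} [Fintype m] [Fintype k] [DecidableEq k]
    (M : Matrix m k ℝ) : 0 ≤ specNorm M := norm_nonneg _

lemma norm_clm_apply_le {m k : Type*} [Fintype m] [Fintype k] [DecidableEq k]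
    (M : Matrix m k ℝ) (x : EuclideanSpace ℝ k) : ‖clm M x‖ ≤ specNorm M * ‖x‖ :=
  (clm M).le_opNorm x

lemma specNorm_le {m k : Type*} [Fintype m] [Fintype k] [DecidableEq k]
    {M : Matrix m k ℝ} {r : ℝ} (hr : 0 ≤ r) (h : ∀ x, ‖clm M x‖ ≤ r * ‖x‖) :
    specNorm M ≤ r :=
  ContinuousLinearMap.opNorm_le_bound _ hr h

lemma specNorm_mul_le {l m k : Type*} [Fintype l] [Fintype m] [Fintype k]
    [DecidableEq m] [DecidableEq k] (P : Matrix l m ℝ) (Q : Matrix m k ℝ) :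
    specNorm (P * Q) ≤ specNorm P * specNorm Q := by
  rw [specNorm_eq, clm_mul]
  exact ContinuousLinearMap.opNorm_comp_le _ _

lemma specNorm_pow_le {k : Type*} [Fintype k] [DecidableEq k]
    (M : Matrix k k ℝ) (p : ℕ) : specNorm (M ^ p) ≤ specNorm M ^ p := by
  induction p with
  | zero =>
      simp only [pow_zero]
      rw [specNorm_eq, clm_one]
      exact ContinuousLinearMap.norm_id_le
  | succ p ih =>
      calc specNorm (M ^ (p + 1)) = specNorm (M * M ^ p) := by rw [pow_succ']
        _ ≤ specNorm M * specNorm (M ^ p) := specNorm_mul_le _ _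
        _ ≤ specNorm M * specNorm M ^ p :=
            mul_le_mul_of_nonneg_left ih (specNorm_nonneg M)
        _ = specNorm M ^ (p + 1) := by rw [pow_succ']

lemma coord_abs_le_norm {k : Type*} [Fintype k] (x : EuclideanSpace ℝ k) (i : k) :
    |x i| ≤ ‖x‖ := by
  rw [EuclideanSpace.norm_eq]
  calc |x i| = Real.sqrt (‖x i‖ ^ 2) := by
        rw [Real.sqrt_sq_eq_abs, Real.norm_eq_abs, abs_abs]
    _ ≤ Real.sqrt (∑ j, ‖x j‖ ^ 2) :=
        Real.sqrt_le_sqrt (Finset.single_le_sum (fun j _ => sq_nonneg ‖x j‖)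
          (Finset.mem_univ i))

lemma abs_entry_le_specNorm {m k : Type*} [Fintype m] [Fintype k] [DecidableEq k]
    (M : Matrix m k ℝ) (i : m) (j : k) : |M i j| ≤ specNorm M := by
  have h1 : (clm M (EuclideanSpace.single j (1 : ℝ))) i = M i j := by
    simp only [clm, LinearMap.coe_toContinuousLinearMap', Matrix.toEuclideanLin_apply,
      EuclideanSpace.ofLp_single, Matrix.mulVec_single, mul_one]
    simp
  calc |M i j| = |(clm M (EuclideanSpace.single j (1 : ℝ))) i| := by rw [h1]
    _ ≤ ‖clm M (EuclideanSpace.single j (1 : ℝ))‖ := coord_abs_le_norm _ i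
    _ ≤ specNorm M * ‖EuclideanSpace.single j (1 : ℝ)‖ := norm_clm_apply_le _ _
    _ = specNorm M := by rw [EuclideanSpace.norm_single]; simp

lemma inner_clm_transpose {m k : Type*} [Fintype m] [Fintype k] [DecidableEq m] [DecidableEq k]
    (M : Matrix m k ℝ) (x : EuclideanSpace ℝ m) (y : EuclideanSpace ℝ k) :
    @inner ℝ _ _ (clm Mᵀ x) y = @inner ℝ _ _ x (clm M y) := by
  have hMt : Mᵀ = Mᴴ := by
    ext i j; simp [Matrix.conjTranspose_apply]
  rw [clm_coe, clm_coe, hMt, Matrix.toEuclideanLin_conjTranspose_eq_adjoint]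
  exact LinearMap.adjoint_inner_left _ _ _

lemma inner_clm_transpose' {m k : Type*} [Fintype m] [Fintype k] [DecidableEq m] [DecidableEq k]
    (M : Matrix m k ℝ) (x : EuclideanSpace ℝ k) (y : EuclideanSpace ℝ m) :
    @inner ℝ _ _ x (clm Mᵀ y) = @inner ℝ _ _ (clm M x) y := by
  rw [real_inner_comm, inner_clm_transpose, real_inner_comm]

lemma sq_le_imp_le {a b : ℝ} (ha : 0 ≤ a) (hb : 0 ≤ b) (h : a ^ 2 ≤ b ^ 2) : a ≤ b := by
  nlinarith

set_option maxHeartbeats 1000000 in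
/-- the partial sums `A_T* + A_T*(A_{Tᶜ}A_{Tᶜ}*) + … + A_T*(A_{Tᶜ}A_{Tᶜ}*)^k`
converge to `(A_T* A_T)⁻¹ A_T*`. -/
theorem stmt_9 {n N : ℕ} (hnN : n < N) (A : Matrix (Fin n) (Fin N) ℝ)
    (hParseval : A * Aᵀ = 1) (T : Finset (Fin N)) (hT : T.card < n)
    (hgram : IsUnit ((cols A T)ᵀ * cols A T))
    (hcompl : IsUnit (cols A Tᶜ * (cols A Tᶜ)ᵀ)) :
    Filter.Tendsto
      (fun k => ∑ l ∈ Finset.range (k+1), (cols A T)ᵀ * (cols A Tᶜ * (cols A Tᶜ)ᵀ) ^ l)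
      Filter.atTop (nhds (((cols A T)ᵀ * cols A T)⁻¹ * (cols A T)ᵀ)) := by
  set M := cols A T with hM
  set Nc := cols A Tᶜ with hNc
  set G := Mᵀ * M with hG
  set C := Nc * Ncᵀ with hC
  -- Step A : M * Mᵀ + C = 1
  have hsplit : M * Mᵀ + C = 1 := by
    ext i j
    have hAA : ∑ c, A i c * A j c = (1 : Matrix (Fin n) (Fin n) ℝ) i j := by
      have := congrFun (congrFun hParseval i) j
      simpa [Matrix.mul_apply] using this
    simp only [Matrix.add_apply, Matrix.mul_apply, hM, hNc, hC, cols,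
      Matrix.transpose_apply, Matrix.of_apply]
    rw [Finset.sum_coe_sort T (fun c => A i c * A j c),
      Finset.sum_coe_sort Tᶜ (fun c => A i c * A j c),
      Finset.sum_add_sum_compl T (fun c => A i c * A j c), hAA]
  have hMMt : M * Mᵀ = 1 - C := by rw [← hsplit, add_sub_cancel_right]
  have hGinv : G⁻¹ * G = 1 :=
    Matrix.nonsing_inv_mul G ((Matrix.isUnit_iff_isUnit_det G).mp hgram)
  -- specNorm Mᵀ ≤ 1
  have hMt_le : specNorm Mᵀ ≤ 1 := by
    apply specNorm_le zero_le_one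
    intro y
    rw [one_mul]
    apply sq_le_imp_le (norm_nonneg _) (norm_nonneg _)
    have h1 : ‖clm Mᵀ y‖ ^ 2 = @inner ℝ _ _ y (clm (M * Mᵀ) y) := by
      rw [← real_inner_self_eq_norm_sq, clm_mul, ContinuousLinearMap.comp_apply,
        inner_clm_transpose, real_inner_comm]
    have h2 : @inner ℝ _ _ y (clm C y) = ‖clm Ncᵀ y‖ ^ 2 := by
      rw [hC, clm_mul, ContinuousLinearMap.comp_apply, ← inner_clm_transpose,
        real_inner_self_eq_norm_sq]
    rw [h1, hMMt, clm_sub, ContinuousLinearMap.sub_apply, clm_one,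
      ContinuousLinearMap.id_apply, inner_sub_right, h2, real_inner_self_eq_norm_sq]
    nlinarith [sq_nonneg ‖clm Ncᵀ y‖]
  -- key spectral bound
  set c' : ℝ := max (specNorm G⁻¹) 1 with hc'
  have hc'1 : (1 : ℝ) ≤ c' := le_max_right _ _
  have hc'0 : (0 : ℝ) < c' := lt_of_lt_of_le one_pos hc'1
  set r : ℝ := Real.sqrt (1 - 1 / c' ^ 2) with hr
  have hsub_nonneg : 0 ≤ 1 - 1 / c' ^ 2 := by
    have : 1 / c' ^ 2 ≤ 1 := by
      rw [div_le_one (by positivity)]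
      nlinarith
    linarith
  have hr0 : 0 ≤ r := Real.sqrt_nonneg _
  have hr1 : r < 1 := by
    rw [hr]
    have : 1 - 1 / c' ^ 2 < 1 := by
      have : 0 < 1 / c' ^ 2 := by positivity
      linarith
    calc Real.sqrt (1 - 1 / c' ^ 2) < Real.sqrt 1 := by
          exact Real.sqrt_lt_sqrt hsub_nonneg (by linarith)
      _ = 1 := Real.sqrt_one
  have hkey : specNorm (1 - G) ≤ r := by
    apply specNorm_le hr0
    intro v
    apply sq_le_imp_le (norm_nonneg _) (by positivity)
    have hGv : clm G v = clm Mᵀ (clm M v) := by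
      rw [hG, clm_mul]; rfl
    have hinner : @inner ℝ _ _ v (clm G v) = ‖clm M v‖ ^ 2 := by
      rw [hGv, inner_clm_transpose', real_inner_self_eq_norm_sq]
    have hGv_le : ‖clm G v‖ ≤ ‖clm M v‖ := by
      calc ‖clm G v‖ = ‖clm Mᵀ (clm M v)‖ := by rw [hGv]
        _ ≤ specNorm Mᵀ * ‖clm M v‖ := norm_clm_apply_le _ _
        _ ≤ 1 * ‖clm M v‖ := mul_le_mul_of_nonneg_right hMt_le (norm_nonneg _)
        _ = ‖clm M v‖ := one_mul _
    have hv_le : ‖v‖ ≤ c' * ‖clm M v‖ := by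
      have hv : clm G⁻¹ (clm G v) = v := by
        rw [← ContinuousLinearMap.comp_apply, ← clm_mul, hGinv, clm_one,
          ContinuousLinearMap.id_apply]
      calc ‖v‖ = ‖clm G⁻¹ (clm G v)‖ := by rw [hv]
        _ ≤ specNorm G⁻¹ * ‖clm G v‖ := norm_clm_apply_le _ _
        _ ≤ c' * ‖clm M v‖ := by
            apply mul_le_mul (le_max_left _ _) hGv_le (norm_nonneg _) (le_of_lt hc'0)
    have hexpand : ‖clm (1 - G) v‖ ^ 2 = ‖v‖ ^ 2 - 2 * ‖clm M v‖ ^ 2 + ‖clm G v‖ ^ 2 := by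
      rw [clm_sub, ContinuousLinearMap.sub_apply, clm_one, ContinuousLinearMap.id_apply,
        norm_sub_sq_real, hinner]
    have hMv2 : ‖v‖ ^ 2 ≤ c' ^ 2 * ‖clm M v‖ ^ 2 := by nlinarith [norm_nonneg v, norm_nonneg (clm M v)]
    have hrsq : r ^ 2 = 1 - 1 / c' ^ 2 := Real.sq_sqrt hsub_nonneg
    have hGv2 : ‖clm G v‖ ^ 2 ≤ ‖clm M v‖ ^ 2 := by
      nlinarith [norm_nonneg (clm G v), norm_nonneg (clm M v)]
    rw [hexpand, mul_pow, hrsq]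
    have hc'2 : (0:ℝ) < c' ^ 2 := by positivity
    have hdiv : ‖v‖ ^ 2 / c' ^ 2 ≤ ‖clm M v‖ ^ 2 := by
      rw [div_le_iff₀ hc'2]; nlinarith [hMv2]
    have hexp2 : (1 - 1 / c' ^ 2) * ‖v‖ ^ 2 = ‖v‖ ^ 2 - ‖v‖ ^ 2 / c' ^ 2 := by
      field_simp
    rw [hexp2]
    linarith [hdiv, hGv2]
  -- partial-sum identity
  have hMtC : ∀ l : ℕ, Mᵀ * C ^ l = (1 - G) ^ l * Mᵀ := by
    intro l
    induction l with
    | zero => simp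
    | succ l ih =>
        have hstep : Mᵀ * C = (1 - G) * Mᵀ := by
          have hCeq : C = 1 - M * Mᵀ := by rw [hMMt, sub_sub_cancel]
          rw [hCeq, hG, Matrix.mul_sub, Matrix.sub_mul, Matrix.mul_one, Matrix.one_mul,
            Matrix.mul_assoc]
        calc Mᵀ * C ^ (l + 1) = (Mᵀ * C) * C ^ l := by rw [pow_succ', ← Matrix.mul_assoc]
          _ = (1 - G) * (Mᵀ * C ^ l) := by rw [hstep, Matrix.mul_assoc]
          _ = (1 - G) * ((1 - G) ^ l * Mᵀ) := by rw [ih]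
          _ = (1 - G) ^ (l + 1) * Mᵀ := by rw [pow_succ', Matrix.mul_assoc]
  have hgeom : ∀ k : ℕ, ∑ l ∈ Finset.range (k + 1), (1 - G) ^ l =
      G⁻¹ * (1 - (1 - G) ^ (k + 1)) := by
    intro k
    have h1 : ((1 - G) - 1) * ∑ l ∈ Finset.range (k + 1), (1 - G) ^ l =
        (1 - G) ^ (k + 1) - 1 := mul_geom_sum _ _
    have h2 : G * ∑ l ∈ Finset.range (k + 1), (1 - G) ^ l = 1 - (1 - G) ^ (k + 1) := by
      have h3 : ((1 - G) - 1) = -G := by rw [sub_sub_cancel_left]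
      rw [h3, neg_mul, neg_eq_iff_eq_neg] at h1
      rw [h1, neg_sub]
    calc ∑ l ∈ Finset.range (k + 1), (1 - G) ^ l
        = (G⁻¹ * G) * ∑ l ∈ Finset.range (k + 1), (1 - G) ^ l := by rw [hGinv, one_mul]
      _ = G⁻¹ * (G * ∑ l ∈ Finset.range (k + 1), (1 - G) ^ l) := by rw [mul_assoc]
      _ = G⁻¹ * (1 - (1 - G) ^ (k + 1)) := by rw [h2]
  set D : ℕ → Matrix {x : Fin N // x ∈ T} (Fin n) ℝ :=
    fun k => G⁻¹ * ((1 - G) ^ (k + 1) * Mᵀ) with hD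
  have hDdef : ∀ k : ℕ, D k = G⁻¹ * ((1 - G) ^ (k + 1) * Mᵀ) := fun k => rfl
  have hS : ∀ k : ℕ, ∑ l ∈ Finset.range (k + 1), Mᵀ * C ^ l =
      G⁻¹ * Mᵀ - D k := by
    intro k
    calc ∑ l ∈ Finset.range (k + 1), Mᵀ * C ^ l
        = ∑ l ∈ Finset.range (k + 1), (1 - G) ^ l * Mᵀ := by
          exact Finset.sum_congr rfl fun l _ => hMtC l
      _ = (∑ l ∈ Finset.range (k + 1), (1 - G) ^ l) * Mᵀ := by rw [Matrix.sum_mul]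
      _ = (G⁻¹ * (1 - (1 - G) ^ (k + 1))) * Mᵀ := by rw [hgeom]
      _ = G⁻¹ * Mᵀ - D k := by
          rw [hDdef, Matrix.mul_sub, Matrix.mul_one, Matrix.sub_mul, Matrix.mul_assoc]
  -- convergence of error term
  have herr : Filter.Tendsto D Filter.atTop (nhds 0) := by
    have hcoord : ∀ (i : {x : Fin N // x ∈ T}) (j : Fin n),
        Filter.Tendsto (fun k : ℕ => D k i j)
          Filter.atTop (nhds 0) := by
      intro i j
      apply squeeze_zero_norm
        (a := fun k : ℕ => (specNorm G⁻¹ * specNorm Mᵀ) * r ^ (k + 1))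
      · intro k
        have hb : |D k i j| ≤ specNorm (D k) := abs_entry_le_specNorm _ i j
        have hc : specNorm (D k) ≤
            specNorm G⁻¹ * (specNorm ((1 - G) ^ (k + 1)) * specNorm Mᵀ) := by
          calc specNorm (D k)
              ≤ specNorm G⁻¹ * specNorm ((1 - G) ^ (k + 1) * Mᵀ) := by
                rw [hDdef]; exact specNorm_mul_le _ _
            _ ≤ specNorm G⁻¹ * (specNorm ((1 - G) ^ (k + 1)) * specNorm Mᵀ) :=
                mul_le_mul_of_nonneg_left (specNorm_mul_le _ _) (specNorm_nonneg _)
        have hd : specNorm ((1 - G) ^ (k + 1)) ≤ r ^ (k + 1) := by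
          calc specNorm ((1 - G) ^ (k + 1)) ≤ specNorm (1 - G) ^ (k + 1) :=
                specNorm_pow_le _ _
            _ ≤ r ^ (k + 1) := pow_le_pow_left₀ (specNorm_nonneg _) hkey _
        rw [Real.norm_eq_abs]
        calc |D k i j|
            ≤ specNorm G⁻¹ * (specNorm ((1 - G) ^ (k + 1)) * specNorm Mᵀ) := le_trans hb hc
          _ ≤ specNorm G⁻¹ * (r ^ (k + 1) * specNorm Mᵀ) := by
              apply mul_le_mul_of_nonneg_left _ (specNorm_nonneg _)
              exact mul_le_mul_of_nonneg_right hd (specNorm_nonneg _)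
          _ = (specNorm G⁻¹ * specNorm Mᵀ) * r ^ (k + 1) := by ring
      · have hpow : Filter.Tendsto (fun k : ℕ => r ^ (k + 1)) Filter.atTop (nhds 0) :=
          (tendsto_pow_atTop_nhds_zero_of_lt_one hr0 hr1).comp (tendsto_add_atTop_nat 1)
        have := hpow.const_mul (specNorm G⁻¹ * specNorm Mᵀ)
        simpa using this
    exact tendsto_pi_nhds.mpr fun i => tendsto_pi_nhds.mpr fun j => hcoord i j
  have hfin : Filter.Tendsto (fun k : ℕ => G⁻¹ * Mᵀ - D k)
      Filter.atTop (nhds (G⁻¹ * Mᵀ)) := by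
    have := (tendsto_const_nhds (x := G⁻¹ * Mᵀ) (f := Filter.atTop (α := ℕ))).sub herr
    simpa using this
  have heq : (fun k : ℕ => ∑ l ∈ Finset.range (k + 1), Mᵀ * C ^ l) =
      fun k : ℕ => G⁻¹ * Mᵀ - D k := funext hS
  rw [show (fun k => ∑ l ∈ Finset.range (k+1), (cols A T)ᵀ * (cols A Tᶜ * (cols A Tᶜ)ᵀ) ^ l)
      = (fun k : ℕ => ∑ l ∈ Finset.range (k + 1), Mᵀ * C ^ l) from rfl, heq]
  exact hfin
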